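/- Let G = (V0 ∪ V1, E) be a bipartite graph with |V0| = |V1| = n and nonnegative edge costs c, let 0 ≤ d ≤ n, and suppose G contains a matching of size n − d. Form the padded bipartite graph Ḡ with parts V̄0 = V0 ∪ D0 and V̄1 = V1 ∪ D1, where D0 and D1 are disjoint sets of d new dummy vertices each, whose edge set is E together with all pairs in D0 × V1 and V0 × D1, each such dummy edge having cost 1 (original edges keep their cost). Then Ḡ has a perfect matching, and the minimum cost of a perfect matching in Ḡ equals w_{n−d}(G, c) + 2d. -/

import Mathlib

/-- `M` is a matching of the bipartite graph with edge set `E`: a set of pairwise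
vertex-disjoint edges of `E`. -/
def IsMatchingIn {α : Type*} (E M : Finset (α × α)) : Prop :=
  M ⊆ E ∧ (∀ p ∈ M, ∀ q ∈ M, p.1 = q.1 → p = q) ∧ (∀ p ∈ M, ∀ q ∈ M, p.2 = q.2 → p = q)

/-- The cost of a matching: the sum of the costs of its edges. -/
noncomputable def matchCost {α : Type*} (c : α × α → ℝ) (M : Finset (α × α)) : ℝ :=
  ∑ e ∈ M, c e

/-- `w_k(G, c)`: the minimum cost of a matching of size exactly `k` in the graph with
edge set `E` and edge costs `c`. -/
noncomputable def minMatchCost {α : Type*} (E : Finset (α × α)) (c : α × α → ℝ) (k : ℕ) : ℝ :=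
  sInf {x : ℝ | ∃ M : Finset (α × α), IsMatchingIn E M ∧ M.card = k ∧ x = matchCost c M}

lemma pad_lemma {α : Type*} [DecidableEq α] (V0 V1 D0 D1 : Finset α) (n d : ℕ)
    (hV0card : V0.card = n) (hV1card : V1.card = n)
    (hD0card : D0.card = d) (hD1card : D1.card = d) (hdn : d ≤ n)
    (hD0V0 : Disjoint D0 V0) (hD1V1 : Disjoint D1 V1)
    (E : Finset (α × α)) (hE : E ⊆ V0 ×ˢ V1)
    (c : α × α → ℝ)
    (Ebar : Finset (α × α)) (hEbar : Ebar = E ∪ D0 ×ˢ V1 ∪ V0 ×ˢ D1)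
    (cbar : α × α → ℝ)
    (hcbarE : ∀ e ∈ E, cbar e = c e)
    (hcbarD : ∀ e ∈ D0 ×ˢ V1 ∪ V0 ×ˢ D1, cbar e = 1)
    (M : Finset (α × α)) (hM : IsMatchingIn E M) (hMcard : M.card = n - d) :
    ∃ Mb : Finset (α × α), IsMatchingIn Ebar Mb ∧ Mb.card = n + d ∧
      matchCost cbar Mb = matchCost c M + 2 * d := by
  obtain ⟨hME, hfst, hsnd⟩ := hM
  have hMV : ∀ p ∈ M, p.1 ∈ V0 ∧ p.2 ∈ V1 := by
    intro p hp
    have := hE (hME hp)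
    simpa [Finset.mem_product] using this
  have hfstinj : Set.InjOn Prod.fst (M : Set (α × α)) := fun p hp q hq h => hfst p hp q hq h
  have hsndinj : Set.InjOn Prod.snd (M : Set (α × α)) := fun p hp q hq h => hsnd p hp q hq h
  have hcard1 : (M.image Prod.fst).card = n - d := by
    rw [Finset.card_image_of_injOn hfstinj, hMcard]
  have hcard2 : (M.image Prod.snd).card = n - d := by
    rw [Finset.card_image_of_injOn hsndinj, hMcard]
  set B0 : Finset α := V0 \ M.image Prod.fst with hB0
  set B1 : Finset α := V1 \ M.image Prod.snd with hB1
  have hB0sub : M.image Prod.fst ⊆ V0 := by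
    intro x hx; obtain ⟨p, hp, rfl⟩ := Finset.mem_image.1 hx; exact (hMV p hp).1
  have hB1sub : M.image Prod.snd ⊆ V1 := by
    intro x hx; obtain ⟨p, hp, rfl⟩ := Finset.mem_image.1 hx; exact (hMV p hp).2
  have hB0card : B0.card = d := by
    rw [hB0, Finset.card_sdiff_of_subset hB0sub, hcard1, hV0card]; omega
  have hB1card : B1.card = d := by
    rw [hB1, Finset.card_sdiff_of_subset hB1sub, hcard2, hV1card]; omega
  have h1 : D0.card = B1.card := by rw [hD0card, hB1card]
  have h2 : B0.card = D1.card := by rw [hB0card, hD1card]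
  let f := Finset.equivOfCardEq h1
  let g := Finset.equivOfCardEq h2
  set P : Finset (α × α) := D0.attach.image (fun x : {a // a ∈ D0} => (x.1, (f x).1)) with hP
  set Q : Finset (α × α) := B0.attach.image (fun x : {a // a ∈ B0} => (x.1, (g x).1)) with hQ
  have hPmem : ∀ p ∈ P, p.1 ∈ D0 ∧ p.2 ∈ B1 := by
    intro p hp
    obtain ⟨x, _, rfl⟩ := Finset.mem_image.1 hp
    exact ⟨x.2, (f x).2⟩
  have hQmem : ∀ p ∈ Q, p.1 ∈ B0 ∧ p.2 ∈ D1 := by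
    intro p hp
    obtain ⟨x, _, rfl⟩ := Finset.mem_image.1 hp
    exact ⟨x.2, (g x).2⟩
  have hPcard : P.card = d := by
    rw [hP, Finset.card_image_of_injective _ (fun x y h => by
      exact Subtype.ext (congrArg Prod.fst h)), Finset.card_attach, hD0card]
  have hQcard : Q.card = d := by
    rw [hQ, Finset.card_image_of_injective _ (fun x y h => by
      exact Subtype.ext (congrArg Prod.fst h)), Finset.card_attach, hB0card]
  -- disjointness facts on first coordinates
  have dMP0 : Disjoint (M.image Prod.fst) D0 := (hD0V0.symm.mono_left hB0sub)
  have dMB0 : Disjoint (M.image Prod.fst) B0 := Finset.sdiff_disjoint.symm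
  have dPB0 : Disjoint D0 B0 := hD0V0.mono_right Finset.sdiff_subset
  -- disjointness facts on second coordinates
  have dMB1 : Disjoint (M.image Prod.snd) B1 := Finset.sdiff_disjoint.symm
  have dMD1 : Disjoint (M.image Prod.snd) D1 := (hD1V1.symm.mono_left hB1sub)
  have dBD1 : Disjoint B1 D1 := hD1V1.symm.mono_left Finset.sdiff_subset
  -- edge-set disjointness
  have hMP : Disjoint M P := by
    rw [Finset.disjoint_left]
    intro p hp hp'
    exact Finset.disjoint_left.1 dMP0 (Finset.mem_image_of_mem _ hp) (hPmem p hp').1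
  have hMQ : Disjoint M Q := by
    rw [Finset.disjoint_left]
    intro p hp hp'
    exact Finset.disjoint_left.1 dMB0 (Finset.mem_image_of_mem _ hp) (hQmem p hp').1
  have hPQ : Disjoint P Q := by
    rw [Finset.disjoint_left]
    intro p hp hp'
    exact Finset.disjoint_left.1 dPB0 (hPmem p hp).1 (hQmem p hp').1
  have hMPQ : Disjoint (M ∪ P) Q := Finset.disjoint_union_left.2 ⟨hMQ, hPQ⟩
  refine ⟨M ∪ P ∪ Q, ⟨?_, ?_, ?_⟩, ?_, ?_⟩
  · -- subset of Ebar
    rw [hEbar]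
    intro p hp
    rcases Finset.mem_union.1 hp with hp | hp
    · rcases Finset.mem_union.1 hp with hp | hp
      · exact Finset.mem_union_left _ (Finset.mem_union_left _ (hME hp))
      · refine Finset.mem_union_left _ (Finset.mem_union_right _ ?_)
        obtain ⟨hh1, hh2⟩ := hPmem p hp
        rw [Finset.mem_product]
        exact ⟨hh1, (Finset.mem_sdiff.1 hh2).1⟩
    · refine Finset.mem_union_right _ ?_
      obtain ⟨hh1, hh2⟩ := hQmem p hp
      rw [Finset.mem_product]
      exact ⟨(Finset.mem_sdiff.1 hh1).1, hh2⟩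
  · -- fst injective
    intro p hp q hq h
    simp only [Finset.mem_union] at hp hq
    rcases hp with (hp | hp) | hp <;> rcases hq with (hq | hq) | hq
    · exact hfst p hp q hq h
    · exact absurd ((hPmem q hq).1)
        (Finset.disjoint_right.1 dMP0 · (h ▸ Finset.mem_image_of_mem _ hp))
    · exact absurd ((hQmem q hq).1)
        (Finset.disjoint_right.1 dMB0 · (h ▸ Finset.mem_image_of_mem _ hp))
    · exact absurd ((hPmem p hp).1)
        (Finset.disjoint_right.1 dMP0 · (h ▸ Finset.mem_image_of_mem _ hq))
    · obtain ⟨x, -, rfl⟩ := Finset.mem_image.1 hp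
      obtain ⟨y, -, rfl⟩ := Finset.mem_image.1 hq
      simp only at h
      rw [Subtype.ext h]
    · exact absurd ((hQmem q hq).1)
        (Finset.disjoint_left.1 dPB0 (h ▸ (hPmem p hp).1))
    · exact absurd ((hQmem p hp).1)
        (Finset.disjoint_right.1 dMB0 · (h ▸ Finset.mem_image_of_mem _ hq))
    · exact absurd ((hQmem p hp).1)
        (Finset.disjoint_right.1 dPB0 · (h ▸ (hPmem q hq).1))
    · obtain ⟨x, -, rfl⟩ := Finset.mem_image.1 hp
      obtain ⟨y, -, rfl⟩ := Finset.mem_image.1 hq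
      simp only at h
      rw [Subtype.ext h]
  · -- snd injective
    intro p hp q hq h
    simp only [Finset.mem_union] at hp hq
    rcases hp with (hp | hp) | hp <;> rcases hq with (hq | hq) | hq
    · exact hsnd p hp q hq h
    · exact absurd ((hPmem q hq).2)
        (Finset.disjoint_right.1 dMB1 · (h ▸ Finset.mem_image_of_mem _ hp))
    · exact absurd ((hQmem q hq).2)
        (Finset.disjoint_right.1 dMD1 · (h ▸ Finset.mem_image_of_mem _ hp))
    · exact absurd ((hPmem p hp).2)
        (Finset.disjoint_right.1 dMB1 · (h ▸ Finset.mem_image_of_mem _ hq))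
    · obtain ⟨x, -, rfl⟩ := Finset.mem_image.1 hp
      obtain ⟨y, -, rfl⟩ := Finset.mem_image.1 hq
      simp only at h
      rw [f.injective (Subtype.ext h)]
    · exact absurd ((hQmem q hq).2)
        (Finset.disjoint_left.1 dBD1 (h ▸ (hPmem p hp).2))
    · exact absurd ((hQmem p hp).2)
        (Finset.disjoint_right.1 dMD1 · (h ▸ Finset.mem_image_of_mem _ hq))
    · exact absurd ((hQmem p hp).2)
        (Finset.disjoint_right.1 dBD1 · (h ▸ (hPmem q hq).2))
    · obtain ⟨x, -, rfl⟩ := Finset.mem_image.1 hp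
      obtain ⟨y, -, rfl⟩ := Finset.mem_image.1 hq
      simp only at h
      rw [g.injective (Subtype.ext h)]
  · -- card
    rw [Finset.card_union_of_disjoint hMPQ, Finset.card_union_of_disjoint hMP,
      hMcard, hPcard, hQcard]
    omega
  · -- cost
    unfold matchCost
    rw [Finset.sum_union hMPQ, Finset.sum_union hMP]
    have e1 : ∑ e ∈ M, cbar e = ∑ e ∈ M, c e :=
      Finset.sum_congr rfl (fun e he => hcbarE e (hME he))
    have e2 : ∑ e ∈ P, cbar e = d := by
      rw [Finset.sum_congr rfl (fun e he => hcbarD e ?_)]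
      · simp [hPcard]
      · refine Finset.mem_union_left _ ?_
        obtain ⟨hh1, hh2⟩ := hPmem e he
        rw [Finset.mem_product]
        exact ⟨hh1, (Finset.mem_sdiff.1 hh2).1⟩
    have e3 : ∑ e ∈ Q, cbar e = d := by
      rw [Finset.sum_congr rfl (fun e he => hcbarD e ?_)]
      · simp [hQcard]
      · refine Finset.mem_union_right _ ?_
        obtain ⟨hh1, hh2⟩ := hQmem e he
        rw [Finset.mem_product]
        exact ⟨(Finset.mem_sdiff.1 hh1).1, hh2⟩
    rw [e1, e2, e3]
    ring

lemma unpad_lemma {α : Type*} [DecidableEq α] (V0 V1 D0 D1 : Finset α) (n d : ℕ)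
    (hV0card : V0.card = n) (hV1card : V1.card = n)
    (hD0card : D0.card = d) (hD1card : D1.card = d) (hdn : d ≤ n)
    (hD0V0 : Disjoint D0 V0) (hD1V1 : Disjoint D1 V1)
    (E : Finset (α × α)) (hE : E ⊆ V0 ×ˢ V1)
    (c : α × α → ℝ)
    (Ebar : Finset (α × α)) (hEbar : Ebar = E ∪ D0 ×ˢ V1 ∪ V0 ×ˢ D1)
    (cbar : α × α → ℝ)
    (hcbarE : ∀ e ∈ E, cbar e = c e)
    (hcbarD : ∀ e ∈ D0 ×ˢ V1 ∪ V0 ×ˢ D1, cbar e = 1)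
    (Mb : Finset (α × α)) (hMb : IsMatchingIn Ebar Mb) (hMbcard : Mb.card = n + d) :
    ∃ M : Finset (α × α), IsMatchingIn E M ∧ M.card = n - d ∧
      matchCost cbar Mb = matchCost c M + 2 * d := by
  obtain ⟨hMbE, hfst, hsnd⟩ := hMb
  set M : Finset (α × α) := Mb ∩ E with hM
  set P : Finset (α × α) := Mb ∩ D0 ×ˢ V1 with hPdef
  set Q : Finset (α × α) := Mb ∩ V0 ×ˢ D1 with hQdef
  -- coordinate facts
  have hloc : ∀ p ∈ Mb, (p ∈ M ∧ p.1 ∈ V0 ∧ p.2 ∈ V1) ∨ (p ∈ P ∧ p.1 ∈ D0 ∧ p.2 ∈ V1)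
      ∨ (p ∈ Q ∧ p.1 ∈ V0 ∧ p.2 ∈ D1) := by
    intro p hp
    have := hMbE hp
    rw [hEbar] at this
    rcases Finset.mem_union.1 this with h | h
    · rcases Finset.mem_union.1 h with h | h
      · left
        have := Finset.mem_product.1 (hE h)
        exact ⟨Finset.mem_inter.2 ⟨hp, h⟩, this.1, this.2⟩
      · right; left
        have := Finset.mem_product.1 h
        exact ⟨Finset.mem_inter.2 ⟨hp, h⟩, this.1, this.2⟩
    · right; right
      have := Finset.mem_product.1 h
      exact ⟨Finset.mem_inter.2 ⟨hp, h⟩, this.1, this.2⟩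
  have hMmem : ∀ p ∈ M, p.1 ∈ V0 ∧ p.2 ∈ V1 := fun p hp => by
    have := Finset.mem_product.1 (hE (Finset.mem_inter.1 hp).2); exact this
  have hPmem : ∀ p ∈ P, p.1 ∈ D0 ∧ p.2 ∈ V1 := fun p hp => by
    have := Finset.mem_product.1 (Finset.mem_inter.1 hp).2; exact this
  have hQmem : ∀ p ∈ Q, p.1 ∈ V0 ∧ p.2 ∈ D1 := fun p hp => by
    have := Finset.mem_product.1 (Finset.mem_inter.1 hp).2; exact this
  -- partition
  have hunion : Mb = M ∪ P ∪ Q := by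
    apply Finset.Subset.antisymm
    · intro p hp
      rcases hloc p hp with ⟨h, -⟩ | ⟨h, -⟩ | ⟨h, -⟩
      · exact Finset.mem_union_left _ (Finset.mem_union_left _ h)
      · exact Finset.mem_union_left _ (Finset.mem_union_right _ h)
      · exact Finset.mem_union_right _ h
    · intro p hp
      rcases Finset.mem_union.1 hp with h | h
      · rcases Finset.mem_union.1 h with h | h
        · exact (Finset.mem_inter.1 h).1
        · exact (Finset.mem_inter.1 h).1
      · exact (Finset.mem_inter.1 h).1
  have hMP : Disjoint M P := by
    rw [Finset.disjoint_left]
    intro p hp hp'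
    exact Finset.disjoint_right.1 hD0V0 (hMmem p hp).1 (hPmem p hp').1
  have hMQ : Disjoint M Q := by
    rw [Finset.disjoint_left]
    intro p hp hp'
    exact Finset.disjoint_right.1 hD1V1 (hMmem p hp).2 (hQmem p hp').2
  have hPQ : Disjoint P Q := by
    rw [Finset.disjoint_left]
    intro p hp hp'
    exact Finset.disjoint_left.1 hD0V0 (hPmem p hp).1 (hQmem p hp').1
  have hMPQ : Disjoint (M ∪ P) Q := Finset.disjoint_union_left.2 ⟨hMQ, hPQ⟩
  -- injectivity on the parts
  have hfstinj : Set.InjOn Prod.fst (Mb : Set (α × α)) := fun p hp q hq h => hfst p hp q hq h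
  have hsndinj : Set.InjOn Prod.snd (Mb : Set (α × α)) := fun p hp q hq h => hsnd p hp q hq h
  -- image of fst covers V0 ∪ D0
  have himgsub : Mb.image Prod.fst ⊆ V0 ∪ D0 := by
    intro x hx
    obtain ⟨p, hp, rfl⟩ := Finset.mem_image.1 hx
    rcases hloc p hp with ⟨-, h, -⟩ | ⟨-, h, -⟩ | ⟨-, h, -⟩
    · exact Finset.mem_union_left _ h
    · exact Finset.mem_union_right _ h
    · exact Finset.mem_union_left _ h
  have himgcard : (Mb.image Prod.fst).card = n + d := by
    rw [Finset.card_image_of_injOn hfstinj, hMbcard]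
  have himgeq : Mb.image Prod.fst = V0 ∪ D0 := by
    apply Finset.eq_of_subset_of_card_le himgsub
    rw [himgcard, Finset.card_union_of_disjoint hD0V0.symm, hV0card, hD0card]
  -- image of snd covers V1 ∪ D1
  have himgsub' : Mb.image Prod.snd ⊆ V1 ∪ D1 := by
    intro x hx
    obtain ⟨p, hp, rfl⟩ := Finset.mem_image.1 hx
    rcases hloc p hp with ⟨-, -, h⟩ | ⟨-, -, h⟩ | ⟨-, -, h⟩
    · exact Finset.mem_union_left _ h
    · exact Finset.mem_union_left _ h
    · exact Finset.mem_union_right _ h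
  have himgcard' : (Mb.image Prod.snd).card = n + d := by
    rw [Finset.card_image_of_injOn hsndinj, hMbcard]
  have himgeq' : Mb.image Prod.snd = V1 ∪ D1 := by
    apply Finset.eq_of_subset_of_card_le himgsub'
    rw [himgcard', Finset.card_union_of_disjoint hD1V1.symm, hV1card, hD1card]
  -- P has exactly d elements
  have hPimg : P.image Prod.fst = D0 := by
    apply Finset.Subset.antisymm
    · intro x hx
      obtain ⟨p, hp, rfl⟩ := Finset.mem_image.1 hx
      exact (hPmem p hp).1
    · intro x hx
      have : x ∈ Mb.image Prod.fst := himgeq ▸ Finset.mem_union_right _ hx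
      obtain ⟨p, hp, rfl⟩ := Finset.mem_image.1 this
      rcases hloc p hp with ⟨-, h, -⟩ | ⟨h, -⟩ | ⟨-, h, -⟩
      · exact absurd hx (Finset.disjoint_right.1 hD0V0 h)
      · exact Finset.mem_image_of_mem _ h
      · exact absurd hx (Finset.disjoint_right.1 hD0V0 h)
  have hPcard : P.card = d := by
    rw [← hD0card, ← hPimg]
    exact (Finset.card_image_of_injOn (hfstinj.mono (by
      intro p hp; exact (Finset.mem_inter.1 hp).1))).symm
  have hQimg : Q.image Prod.snd = D1 := by
    apply Finset.Subset.antisymm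
    · intro x hx
      obtain ⟨p, hp, rfl⟩ := Finset.mem_image.1 hx
      exact (hQmem p hp).2
    · intro x hx
      have : x ∈ Mb.image Prod.snd := himgeq' ▸ Finset.mem_union_right _ hx
      obtain ⟨p, hp, rfl⟩ := Finset.mem_image.1 this
      rcases hloc p hp with ⟨-, -, h⟩ | ⟨-, -, h⟩ | ⟨h, -⟩
      · exact absurd hx (Finset.disjoint_right.1 hD1V1 h)
      · exact absurd hx (Finset.disjoint_right.1 hD1V1 h)
      · exact Finset.mem_image_of_mem _ h
  have hQcard : Q.card = d := by
    rw [← hD1card, ← hQimg]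
    exact (Finset.card_image_of_injOn (hsndinj.mono (by
      intro p hp; exact (Finset.mem_inter.1 hp).1))).symm
  have hMcard : M.card = n - d := by
    have := hMbcard
    rw [hunion, Finset.card_union_of_disjoint hMPQ, Finset.card_union_of_disjoint hMP,
      hPcard, hQcard] at this
    omega
  refine ⟨M, ⟨fun p hp => (Finset.mem_inter.1 hp).2,
    fun p hp q hq h => hfst p (Finset.mem_inter.1 hp).1 q (Finset.mem_inter.1 hq).1 h,
    fun p hp q hq h => hsnd p (Finset.mem_inter.1 hp).1 q (Finset.mem_inter.1 hq).1 h⟩,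
    hMcard, ?_⟩
  unfold matchCost
  rw [hunion, Finset.sum_union hMPQ, Finset.sum_union hMP]
  have e1 : ∑ e ∈ M, cbar e = ∑ e ∈ M, c e :=
    Finset.sum_congr rfl (fun e he => hcbarE e (Finset.mem_inter.1 he).2)
  have e2 : ∑ e ∈ P, cbar e = d := by
    rw [Finset.sum_congr rfl (fun e he => hcbarD e
      (Finset.mem_union_left _ (Finset.mem_inter.1 he).2))]
    simp [hPcard]
    exact hPcard
  have e3 : ∑ e ∈ Q, cbar e = d := by
    rw [Finset.sum_congr rfl (fun e he => hcbarD e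
      (Finset.mem_union_right _ (Finset.mem_inter.1 he).2))]
    simp [hQcard]
    exact hQcard
  rw [e1, e2, e3]
  ring

/-- Let `G = (V0 ∪ V1, E)` be bipartite with `|V0| = |V1| = n` and
nonnegative costs `c`, let `0 ≤ d ≤ n`, and suppose `G` has a matching of size `n − d`.
Pad with disjoint sets `D0`, `D1` of `d` new dummy vertices each, adding all edges in
`D0 × V1` and `V0 × D1` of cost `1`. Then the padded graph has a perfect matching
(a matching of size `n + d`), and its minimum perfect-matching cost equals
`w_{n−d}(G, c) + 2d`. -/
theorem stmt_8 {α : Type*} [DecidableEq α] (V0 V1 D0 D1 : Finset α) (n d : ℕ)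
    (hV0card : V0.card = n) (hV1card : V1.card = n)
    (hD0card : D0.card = d) (hD1card : D1.card = d) (hdn : d ≤ n)
    (hV0V1 : Disjoint V0 V1) (hD0V0 : Disjoint D0 V0) (hD0V1 : Disjoint D0 V1)
    (hD1V0 : Disjoint D1 V0) (hD1V1 : Disjoint D1 V1) (hD0D1 : Disjoint D0 D1)
    (E : Finset (α × α)) (hE : E ⊆ V0 ×ˢ V1)
    (c : α × α → ℝ) (hc : ∀ e ∈ E, 0 ≤ c e)
    -- the padded graph `Ḡ`:
    (Ebar : Finset (α × α)) (hEbar : Ebar = E ∪ D0 ×ˢ V1 ∪ V0 ×ˢ D1)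
    (cbar : α × α → ℝ)
    (hcbarE : ∀ e ∈ E, cbar e = c e)
    (hcbarD : ∀ e ∈ D0 ×ˢ V1 ∪ V0 ×ˢ D1, cbar e = 1)
    -- `G` contains a matching of size `n − d`:
    (hmatch : ∃ M : Finset (α × α), IsMatchingIn E M ∧ M.card = n - d) :
    (∃ Mb : Finset (α × α), IsMatchingIn Ebar Mb ∧ Mb.card = n + d) ∧
      minMatchCost Ebar cbar (n + d) = minMatchCost E c (n - d) + 2 * d := by
  obtain ⟨M0, hM0, hM0card⟩ := hmatch
  obtain ⟨Mb0, hMb0, hMb0card, -⟩ := pad_lemma V0 V1 D0 D1 n d hV0card hV1card hD0card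
    hD1card hdn hD0V0 hD1V1 E hE c Ebar hEbar cbar hcbarE hcbarD M0 hM0 hM0card
  refine ⟨⟨Mb0, hMb0, hMb0card⟩, ?_⟩
  set S : Set ℝ :=
    {x : ℝ | ∃ M : Finset (α × α), IsMatchingIn E M ∧ M.card = n - d ∧ x = matchCost c M}
    with hS
  set T : Set ℝ :=
    {x : ℝ | ∃ M : Finset (α × α), IsMatchingIn Ebar M ∧ M.card = n + d ∧ x = matchCost cbar M}
    with hT
  have hTS : T = (fun x : ℝ => x + 2 * (d : ℝ)) '' S := by
    ext x
    constructor
    · rintro ⟨Mb, hMb, hMbcard, rfl⟩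
      obtain ⟨M, hM, hMcard, heq⟩ := unpad_lemma V0 V1 D0 D1 n d hV0card hV1card hD0card
        hD1card hdn hD0V0 hD1V1 E hE c Ebar hEbar cbar hcbarE hcbarD Mb hMb hMbcard
      exact ⟨matchCost c M, ⟨M, hM, hMcard, rfl⟩, heq.symm⟩
    · rintro ⟨y, ⟨M, hM, hMcard, rfl⟩, rfl⟩
      obtain ⟨Mb, hMb, hMbcard, heq⟩ := pad_lemma V0 V1 D0 D1 n d hV0card hV1card hD0card
        hD1card hdn hD0V0 hD1V1 E hE c Ebar hEbar cbar hcbarE hcbarD M hM hMcard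
      exact ⟨Mb, hMb, hMbcard, heq.symm⟩
  have hSne : S.Nonempty := ⟨matchCost c M0, M0, hM0, hM0card, rfl⟩
  have hSbdd : BddBelow S := by
    refine ⟨0, ?_⟩
    rintro x ⟨M, hM, -, rfl⟩
    exact Finset.sum_nonneg fun e he => hc e (hM.1 he)
  have key := (OrderIso.addRight (2 * (d : ℝ))).map_csInf' hSne hSbdd
  unfold minMatchCost
  rw [← hS, ← hT, hTS,
    show (fun x : ℝ => x + 2 * (d : ℝ)) = ⇑(OrderIso.addRight (2 * (d : ℝ))) from rfl, ← key]
  rfl
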